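/- Let n ≥ 1 and let x_1, …, x_n ∈ (0,∞) with empirical distribution function 𝔽(r) := (1/n)·#{i : x_i ≤ r}. Let 𝒦 denote the set of all functions h : [0,∞) → ℝ that are convex on [0,∞) and Lebesgue integrable over [0,∞). Suppose f̂ ∈ 𝒦 is square-integrable and minimizes Φ(h) := ∫_0^∞ h(x)² dx − (2/n)·∑_{i=1}^n h(x_i) over all square-integrable h ∈ 𝒦. Suppose moreover there are points 0 = t_0 < t_1 < … < t_m with t_m > max_i x_i such that f̂ is affine on each interval [t_{k−1}, t_k], f̂ = 0 on [t_m, ∞), and at each t_k (1 ≤ k ≤ m) the right derivative of f̂ is strictly larger than the left derivative. Let F̂(r) := ∫_0^r f̂(x) dx. Then 𝔽(t_k) = F̂(t_k) for k = 0, 1, …, m. -/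

import Mathlib

open MeasureTheory Set


private lemma adj_mul {f : ℝ → ℝ} (hf : ConvexOn ℝ (Ici 0) f) {x y z : ℝ}
    (hx : 0 ≤ x) (hxy : x < y) (hyz : y < z) :
    (f y - f x) * (z - y) ≤ (f z - f y) * (y - x) := by
  have h := hf.slope_mono_adjacent (mem_Ici.mpr hx)
    (mem_Ici.mpr (by linarith : (0:ℝ) ≤ z)) hxy hyz
  rw [div_le_div_iff₀ (by linarith) (by linarith)] at h
  linarith

private lemma conv_pert {f : ℝ → ℝ} (hf : ConvexOn ℝ (Ici 0) f) {p L R ε : ℝ} (hp : 0 < p)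
    (hL : ∀ x y, 0 ≤ x → x < y → y ≤ p → f y - f x ≤ L * (y - x))
    (hR : ∀ x y, p ≤ x → x < y → R * (y - x) ≤ f y - f x)
    (hεLR : L - R ≤ ε) (hε0 : ε ≤ 0) :
    ConvexOn ℝ (Ici 0) (fun y => f y + ε * max (p - y) 0) := by
  apply convexOn_of_slope_mono_adjacent (convex_Ici 0)
  intro x y z hx hz hxy hyz
  have hx0 : (0:ℝ) ≤ x := hx
  rw [div_le_div_iff₀ (by linarith) (by linarith)]
  rcases le_or_gt z p with hzp | hpz
  · rw [max_eq_left (by linarith : (0:ℝ) ≤ p - x), max_eq_left (by linarith : (0:ℝ) ≤ p - y),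
      max_eq_left (by linarith : (0:ℝ) ≤ p - z)]
    nlinarith [adj_mul hf hx0 hxy hyz]
  rcases le_or_gt p x with hpx | hxp
  · rw [max_eq_right (by linarith : p - x ≤ 0), max_eq_right (by linarith : p - y ≤ 0),
      max_eq_right (by linarith : p - z ≤ 0)]
    nlinarith [adj_mul hf hx0 hxy hyz]
  rcases le_or_gt y p with hyp | hpy
  · rw [max_eq_left (by linarith : (0:ℝ) ≤ p - x), max_eq_left (by linarith : (0:ℝ) ≤ p - y),
      max_eq_right (by linarith : p - z ≤ 0)]
    rcases eq_or_lt_of_le hyp with rfl | hylt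
    · have h1 := hL x y hx0 hxy le_rfl
      have h2 := hR y z le_rfl hyz
      nlinarith [mul_le_mul_of_nonneg_right h1 (by linarith : (0:ℝ) ≤ z - y),
        mul_le_mul_of_nonneg_right h2 (by linarith : (0:ℝ) ≤ y - x),
        mul_nonneg (mul_nonneg (by linarith : (0:ℝ) ≤ y - x) (by linarith : (0:ℝ) ≤ z - y))
          (by linarith : (0:ℝ) ≤ ε - (L - R))]
    · have hpy' : (0:ℝ) < p - y := by linarith
      rw [← mul_le_mul_iff_of_pos_right hpy']
      have S1 := mul_le_mul_of_nonneg_right (adj_mul hf hx0 hxy hylt)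
        (by linarith : (0:ℝ) ≤ z - y)
      have S2 := mul_le_mul_of_nonneg_right (hL y p (by linarith) hylt le_rfl)
        (mul_nonneg (by linarith : (0:ℝ) ≤ y - x) (by linarith : (0:ℝ) ≤ z - p))
      have S3 := mul_le_mul_of_nonneg_right (hR p z le_rfl (by linarith))
        (mul_nonneg (by linarith : (0:ℝ) ≤ y - x) (by linarith : (0:ℝ) ≤ p - y))
      have S4 : (L - R - ε) * ((p - y) * ((z - p) * (y - x))) ≤ 0 :=
        mul_nonpos_of_nonpos_of_nonneg (by linarith)
          (mul_nonneg (by linarith) (mul_nonneg (by linarith) (by linarith)))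
      nlinarith [S1, S2, S3, S4]
  · rw [max_eq_left (by linarith : (0:ℝ) ≤ p - x), max_eq_right (by linarith : p - y ≤ 0),
      max_eq_right (by linarith : p - z ≤ 0)]
    have b1 := adj_mul hf (le_of_lt hp) hpy hyz
    have S0 : R * (z - y) ≤ f z - f y := by
      have h3 := mul_le_mul_of_nonneg_right (hR p y le_rfl hpy) (by linarith : (0:ℝ) ≤ z - y)
      have key : (R * (z - y)) * (y - p) ≤ (f z - f y) * (y - p) := by nlinarith [b1, h3]
      exact le_of_mul_le_mul_right key (by linarith : (0:ℝ) < y - p)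
    have S2 := mul_le_mul_of_nonneg_right (hL x p hx0 hxp le_rfl)
      (by linarith : (0:ℝ) ≤ z - y)
    have S3 := mul_le_mul_of_nonneg_right S0 (by linarith : (0:ℝ) ≤ p - x)
    have S4 : (L - R - ε) * ((p - x) * (z - y)) ≤ 0 :=
      mul_nonpos_of_nonpos_of_nonneg (by linarith)
        (mul_nonneg (by linarith) (by linarith))
    nlinarith [b1, S2, S3, S4]


private lemma adj_mul' {f : ℝ → ℝ} (hf : ConvexOn ℝ (Ici 0) f) {x y z : ℝ}
    (hx : 0 ≤ x) (hxy : x < y) (hyz : y < z) :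
    (f y - f x) * (z - y) ≤ (f z - f y) * (y - x) := by
  have h := hf.slope_mono_adjacent (mem_Ici.mpr hx)
    (mem_Ici.mpr (by linarith : (0:ℝ) ≤ z)) hxy hyz
  rw [div_le_div_iff₀ (by linarith) (by linarith)] at h
  linarith

private lemma nonneg_of_conv {f : ℝ → ℝ} {T : ℝ} (hf : ConvexOn ℝ (Ici 0) f)
    (h0 : ∀ y, T ≤ y → f y = 0) : ∀ y, 0 ≤ y → 0 ≤ f y := by
  intro y hy
  set z1 := max y T + 1 with hz1
  have hyz1 : y < z1 := by have := le_max_left y T; linarith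
  have hz1z2 : z1 < z1 + 1 := by linarith
  have h1 : f z1 = 0 := h0 _ (by have := le_max_right y T; linarith)
  have h2 : f (z1 + 1) = 0 := h0 _ (by have := le_max_right y T; linarith)
  have := adj_mul' hf hy hyz1 hz1z2
  rw [h1, h2] at this
  nlinarith

private lemma anti_of_conv {f : ℝ → ℝ} {T : ℝ} (hf : ConvexOn ℝ (Ici 0) f)
    (h0 : ∀ y, T ≤ y → f y = 0) : ∀ a b, 0 ≤ a → a ≤ b → f b ≤ f a := by
  intro a b ha hab
  rcases eq_or_lt_of_le hab with rfl | hab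
  · exact le_rfl
  set z := max b T + 1 with hz
  have hbz : b < z := by have := le_max_left b T; linarith
  have hz0 : f z = 0 := h0 _ (by have := le_max_right b T; linarith)
  have hfb : 0 ≤ f b := nonneg_of_conv hf h0 b (by linarith)
  have := adj_mul' hf ha hab hbz
  rw [hz0] at this
  nlinarith

private lemma intOn_max (s : ℝ) :
    IntegrableOn (fun y => max (s - y) 0) (Ici (0:ℝ)) := by
  have hcont : Continuous (fun y : ℝ => max (s - y) 0) :=
    (continuous_const.sub continuous_id).max continuous_const
  have hzero : IntegrableOn (fun y : ℝ => max (s - y) 0) (Ioi (max s 0)) := by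
    apply (integrableOn_zero (s := Ioi (max s 0))).congr_fun
      (fun y hy => ?_) measurableSet_Ioi
    have : s - y < 0 := by have := le_max_left s 0; simp only [mem_Ioi] at hy; linarith
    simp [max_eq_right this.le]
  have hIcc : IntegrableOn (fun y : ℝ => max (s - y) 0) (Icc 0 (max s 0)) :=
    hcont.integrableOn_Icc
  have := hIcc.union hzero
  apply this.mono_set
  intro y hy
  rcases le_or_gt y (max s 0) with h | h
  · exact Or.inl ⟨hy, h⟩
  · exact Or.inr h

private lemma intOn_mul_max {f : ℝ → ℝ} (hfint : IntegrableOn f (Ici 0)) (s : ℝ) :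
    IntegrableOn (fun y => f y * max (s - y) 0) (Ici (0:ℝ)) := by
  have hcont : Continuous (fun y : ℝ => max (s - y) 0) :=
    (continuous_const.sub continuous_id).max continuous_const
  have h := hfint.bdd_mul (f := fun y : ℝ => max (s - y) 0) (c := max s 0)
    (hcont.aestronglyMeasurable.restrict)
    (by
      refine (ae_restrict_iff' measurableSet_Ici).mpr (ae_of_all _ fun y hy => ?_)
      have hy0 : (0:ℝ) ≤ y := hy
      rw [Real.norm_eq_abs, abs_of_nonneg (le_max_right _ _)]
      rcases le_or_gt (s - y) 0 with h | h
      · rw [max_eq_right h]; exact le_max_right _ _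
      · rw [max_eq_left h.le]; have := le_max_left s 0; linarith)
  exact h.congr (ae_of_all _ fun y => mul_comm _ _)

private lemma intOn_sq_max (s : ℝ) :
    IntegrableOn (fun y => (max (s - y) 0)^2) (Ici (0:ℝ)) := by
  have h := intOn_mul_max (intOn_max s) s
  exact h.congr (ae_of_all _ fun y => by simp only; ring)

private lemma convexOn_max_sub (s : ℝ) :
    ConvexOn ℝ (Ici (0:ℝ)) (fun y => max (s - y) 0) := by
  have h1 : ConvexOn ℝ (Ici (0:ℝ)) (fun y => s - y) := by
    refine ⟨convex_Ici 0, ?_⟩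
    intro x _ y _ a b ha hb hab
    simp only [smul_eq_mul]
    apply le_of_eq
    linear_combination (-s) * hab
  have h2 : ConvexOn ℝ (Ici (0:ℝ)) (fun _ => (0:ℝ)) := convexOn_const 0 (convex_Ici 0)
  exact h1.sup h2



private lemma quad_nonneg_pos {A B : ℝ} (hB : 0 ≤ B)
    (h : ∀ ε : ℝ, 0 < ε → 0 ≤ 2*ε*A + ε^2*B) : 0 ≤ A := by
  by_contra hA
  push_neg at hA
  rcases eq_or_lt_of_le hB with hB0 | hBpos
  · nlinarith [h 1 one_pos]
  · have h2 := h (-A / B) (div_pos (by linarith) hBpos)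
    have h3 : 2 * (-A / B) * A + (-A / B)^2 * B = -(A^2 / B) := by
      field_simp
      ring
    have h4 : 0 < A^2 / B := div_pos (by nlinarith) hBpos
    linarith

private lemma quad_nonpos_neg {A B δ : ℝ} (hB : 0 ≤ B) (hδ : 0 < δ)
    (h : ∀ ε : ℝ, -δ ≤ ε → ε < 0 → 0 ≤ 2*ε*A + ε^2*B) : A ≤ 0 := by
  by_contra hA
  push_neg at hA
  have hmin : 0 < min δ (A / (B + 1)) := lt_min hδ (div_pos hA (by linarith))
  obtain ⟨ε, hε⟩ : ∃ ε : ℝ, ε = -min δ (A / (B + 1)) := ⟨_, rfl⟩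
  have hεneg : ε < 0 := by rw [hε]; linarith
  have hεlb : -δ ≤ ε := by
    have := min_le_left δ (A / (B + 1)); rw [hε]; linarith
  have hcore := h ε hεlb hεneg
  have h1 : 2 * A + ε * B ≤ 0 := by nlinarith
  have h2 : -(A / (B + 1)) ≤ ε := by
    have := min_le_right δ (A / (B + 1)); rw [hε]; linarith
  have h3 : A / (B + 1) * B ≤ A := by
    rw [div_mul_eq_mul_div, div_le_iff₀ (by linarith : (0:ℝ) < B + 1)]
    nlinarith
  have h4 : -ε * B ≤ A / (B + 1) * B := mul_le_mul_of_nonneg_right (by linarith) hB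
  linarith

private lemma core_ineq (n : ℕ) (x : Fin n → ℝ) (fhat : ℝ → ℝ)
    (hfint : IntegrableOn fhat (Ici 0))
    (hfsq : IntegrableOn (fun y => fhat y ^ 2) (Ici 0))
    (hopt : ∀ h : ℝ → ℝ, ConvexOn ℝ (Ici 0) h → IntegrableOn h (Ici 0) →
      IntegrableOn (fun y => h y ^ 2) (Ici 0) →
      (∫ y in Ici (0 : ℝ), fhat y ^ 2) - (2 / n) * ∑ i, fhat (x i) ≤
        (∫ y in Ici (0 : ℝ), h y ^ 2) - (2 / n) * ∑ i, h (x i))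
    (s ε : ℝ)
    (hconv : ConvexOn ℝ (Ici 0) (fun y => fhat y + ε * max (s - y) 0)) :
    0 ≤ 2 * ε * ((∫ y in Ici (0:ℝ), fhat y * max (s - y) 0)
        - (n : ℝ)⁻¹ * ∑ i, max (s - x i) 0)
      + ε^2 * (∫ y in Ici (0:ℝ), (max (s - y) 0)^2) := by
  set g : ℝ → ℝ := fun y => fhat y + ε * max (s - y) 0 with hg
  have hΔ : IntegrableOn (fun y => max (s - y) 0) (Ici (0:ℝ)) := intOn_max s
  have hfΔ : IntegrableOn (fun y => fhat y * max (s - y) 0) (Ici (0:ℝ)) :=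
    intOn_mul_max hfint s
  have hΔsq : IntegrableOn (fun y => (max (s - y) 0)^2) (Ici (0:ℝ)) := intOn_sq_max s
  have hgint : IntegrableOn g (Ici 0) := hfint.add (hΔ.const_mul ε)
  have hkey : (fun y => g y ^ 2) = fun y =>
      fhat y ^ 2 + ((2*ε) * (fhat y * max (s - y) 0) + ε^2 * (max (s - y) 0)^2) := by
    funext y; simp only [hg]; ring
  have hgsq : IntegrableOn (fun y => g y ^ 2) (Ici 0) := by
    rw [hkey]
    exact hfsq.add ((hfΔ.const_mul (2*ε)).add (hΔsq.const_mul (ε^2)))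
  have hsplit : (∫ y in Ici (0:ℝ), g y ^ 2) = (∫ y in Ici (0:ℝ), fhat y ^ 2)
      + ((2*ε) * (∫ y in Ici (0:ℝ), fhat y * max (s - y) 0)
        + ε^2 * (∫ y in Ici (0:ℝ), (max (s - y) 0)^2)) := by
    have hI1 : Integrable (fun y => (2*ε) * (fhat y * max (s - y) 0)) (volume.restrict (Ici 0)) :=
      hfΔ.const_mul (2*ε)
    have hI2 : Integrable (fun y => ε^2 * (max (s - y) 0)^2) (volume.restrict (Ici 0)) :=
      hΔsq.const_mul (ε^2)
    have hI3 : Integrable (fun y => (2*ε) * (fhat y * max (s - y) 0) + ε^2 * (max (s - y) 0)^2)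
        (volume.restrict (Ici 0)) := hI1.add hI2
    rw [hkey, integral_add hfsq hI3, integral_add hI1 hI2, integral_const_mul, integral_const_mul]
  have hsum : ∑ i, g (x i) = ∑ i, fhat (x i) + ε * ∑ i, max (s - x i) 0 := by
    simp only [hg, Finset.mul_sum, Finset.sum_add_distrib]
  have hkey2 := hopt g hconv hgint hgsq
  rw [hsplit, hsum] at hkey2
  have hfrac : (2 / (n:ℝ)) * (ε * ∑ i, max (s - x i) 0)
      = 2 * ε * ((n:ℝ)⁻¹ * ∑ i, max (s - x i) 0) := by ring
  nlinarith [hkey2]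

private lemma var_ge (n : ℕ) (x : Fin n → ℝ) (fhat : ℝ → ℝ)
    (hfconv : ConvexOn ℝ (Ici 0) fhat)
    (hfint : IntegrableOn fhat (Ici 0))
    (hfsq : IntegrableOn (fun y => fhat y ^ 2) (Ici 0))
    (hopt : ∀ h : ℝ → ℝ, ConvexOn ℝ (Ici 0) h → IntegrableOn h (Ici 0) →
      IntegrableOn (fun y => h y ^ 2) (Ici 0) →
      (∫ y in Ici (0 : ℝ), fhat y ^ 2) - (2 / n) * ∑ i, fhat (x i) ≤
        (∫ y in Ici (0 : ℝ), h y ^ 2) - (2 / n) * ∑ i, h (x i))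
    (s : ℝ) :
    (n : ℝ)⁻¹ * ∑ i, max (s - x i) 0 ≤ ∫ y in Ici (0:ℝ), fhat y * max (s - y) 0 := by
  have hB0 : 0 ≤ ∫ y in Ici (0:ℝ), (max (s - y) 0)^2 :=
    setIntegral_nonneg measurableSet_Ici (fun y _ => sq_nonneg _)
  have hcore : ∀ ε : ℝ, 0 < ε → 0 ≤ 2*ε*((∫ y in Ici (0:ℝ), fhat y * max (s - y) 0)
      - (n : ℝ)⁻¹ * ∑ i, max (s - x i) 0) + ε^2*(∫ y in Ici (0:ℝ), (max (s - y) 0)^2) := by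
    intro ε hε
    refine core_ineq n x fhat hfint hfsq hopt s ε ?_
    exact hfconv.add ((convexOn_max_sub s).smul (le_of_lt hε))
  linarith [quad_nonneg_pos hB0 hcore]

private lemma var_le (n : ℕ) (x : Fin n → ℝ) (fhat : ℝ → ℝ)
    (hfint : IntegrableOn fhat (Ici 0))
    (hfsq : IntegrableOn (fun y => fhat y ^ 2) (Ici 0))
    (hopt : ∀ h : ℝ → ℝ, ConvexOn ℝ (Ici 0) h → IntegrableOn h (Ici 0) →
      IntegrableOn (fun y => h y ^ 2) (Ici 0) →
      (∫ y in Ici (0 : ℝ), fhat y ^ 2) - (2 / n) * ∑ i, fhat (x i) ≤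
        (∫ y in Ici (0 : ℝ), h y ^ 2) - (2 / n) * ∑ i, h (x i))
    (s δ : ℝ) (hδ : 0 < δ)
    (hconvs : ∀ ε : ℝ, -δ ≤ ε → ε ≤ 0 →
      ConvexOn ℝ (Ici 0) (fun y => fhat y + ε * max (s - y) 0)) :
    (∫ y in Ici (0:ℝ), fhat y * max (s - y) 0) ≤ (n : ℝ)⁻¹ * ∑ i, max (s - x i) 0 := by
  have hB0 : 0 ≤ ∫ y in Ici (0:ℝ), (max (s - y) 0)^2 :=
    setIntegral_nonneg measurableSet_Ici (fun y _ => sq_nonneg _)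
  have hcore : ∀ ε : ℝ, -δ ≤ ε → ε < 0 → 0 ≤ 2*ε*((∫ y in Ici (0:ℝ), fhat y * max (s - y) 0)
      - (n : ℝ)⁻¹ * ∑ i, max (s - x i) 0) + ε^2*(∫ y in Ici (0:ℝ), (max (s - y) 0)^2) := by
    intro ε hεlb hεneg
    exact core_ineq n x fhat hfint hfsq hopt s ε (hconvs ε hεlb hεneg.le)
  linarith [quad_nonpos_neg hB0 hδ hcore]



private lemma disj_Icc_Ioc {a b c : ℝ} : Disjoint (Icc a b) (Ioc b c) :=
  Set.disjoint_left.mpr fun y hy1 hy2 => absurd hy2.1 (not_lt.mpr hy1.2)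

private lemma disj_Icc_Ioi {a b : ℝ} : Disjoint (Icc a b) (Ioi b) :=
  Set.disjoint_left.mpr fun y hy1 hy2 => absurd hy2 (not_lt.mpr hy1.2)

private lemma W_diff_upper {f : ℝ → ℝ} (hfint : IntegrableOn f (Ici 0))
    (hpos : ∀ y, 0 ≤ y → 0 ≤ f y)
    (hanti : ∀ a b, 0 ≤ a → a ≤ b → f b ≤ f a)
    {K h : ℝ} (hK : 0 < K) (hh : 0 < h) :
    (∫ y in Ici (0:ℝ), f y * max (K + h - y) 0) - (∫ y in Ici (0:ℝ), f y * max (K - y) 0)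
      ≤ h * (∫ y in Icc (0:ℝ) K, f y) + h^2 * f K := by
  have hfΔ1 := intOn_mul_max hfint (K + h)
  have hfΔ2 := intOn_mul_max hfint K
  rw [← integral_sub hfΔ1 hfΔ2]
  set D : ℝ → ℝ := fun y => f y * max (K + h - y) 0 - f y * max (K - y) 0 with hD
  have hDI : IntegrableOn D (Ici 0) := hfΔ1.sub hfΔ2
  have hsub1 : Icc (0:ℝ) (K+h) ⊆ Ici 0 := fun y hy => hy.1
  have hsub2 : Ioi (K+h) ⊆ Ici (0:ℝ) := fun y hy => by
    simp only [mem_Ioi] at hy; exact mem_Ici.mpr (by linarith)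
  have hsplit1 : ∫ y in Ici (0:ℝ), D y
      = (∫ y in Icc (0:ℝ) (K+h), D y) + ∫ y in Ioi (K+h), D y := by
    rw [← setIntegral_union disj_Icc_Ioi measurableSet_Ioi (hDI.mono_set hsub1)
      (hDI.mono_set hsub2), Icc_union_Ioi_eq_Ici (by linarith)]
  have hzero : ∫ y in Ioi (K+h), D y = 0 := by
    rw [setIntegral_congr_fun measurableSet_Ioi (fun y hy => ?_), integral_zero]
    have : K + h < y := hy
    simp only [hD, Pi.zero_apply]
    rw [max_eq_right (by linarith : K + h - y ≤ 0), max_eq_right (by linarith : K - y ≤ 0)]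
    ring
  have hsplit2 : ∫ y in Icc (0:ℝ) (K+h), D y
      = (∫ y in Icc (0:ℝ) K, D y) + ∫ y in Ioc K (K+h), D y := by
    rw [← setIntegral_union disj_Icc_Ioc measurableSet_Ioc
      (hDI.mono_set (fun y hy => hy.1)) (hDI.mono_set (fun y hy => by
        simp only [mem_Ioc] at hy; exact mem_Ici.mpr (by linarith))),
      Icc_union_Ioc_eq_Icc (le_of_lt hK) (by linarith)]
  have hmain : ∫ y in Icc (0:ℝ) K, D y = h * ∫ y in Icc (0:ℝ) K, f y := by
    rw [setIntegral_congr_fun measurableSet_Icc (g := fun y => h * f y) (fun y hy => ?_),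
      integral_const_mul]
    have h1 : 0 ≤ K - y := by linarith [hy.2]
    simp only [hD]
    rw [max_eq_left (by linarith), max_eq_left (by linarith)]
    ring
  have hmid : ∫ y in Ioc K (K+h), D y ≤ h^2 * f K := by
    have hle : ∫ y in Ioc K (K+h), D y ≤ ∫ _ in Ioc K (K+h), f K * h := by
      apply setIntegral_mono_on (hDI.mono_set (fun y hy => by
        simp only [mem_Ioc] at hy; exact mem_Ici.mpr (by linarith)))
        (integrableOn_const measure_Ioc_lt_top.ne) measurableSet_Ioc
      intro y hy
      simp only [mem_Ioc] at hy
      simp only [hD]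
      rw [max_eq_left (by linarith : (0:ℝ) ≤ K + h - y), max_eq_right (by linarith : K - y ≤ 0)]
      have hfy : f y ≤ f K := hanti K y (le_of_lt hK) (le_of_lt hy.1)
      have hfy0 : 0 ≤ f y := hpos y (by linarith)
      have hKy : 0 ≤ K + h - y := by linarith
      have hKy2 : K + h - y ≤ h := by linarith
      have hfK0 : 0 ≤ f K := hpos K (le_of_lt hK)
      calc f y * (K + h - y) - f y * 0 = f y * (K + h - y) := by ring
        _ ≤ f K * h := by nlinarith
    rw [setIntegral_const] at hle
    rw [Real.volume_real_Ioc_of_le (by linarith), show K + h - K = h by ring,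
      smul_eq_mul] at hle
    calc ∫ y in Ioc K (K+h), D y ≤ h * (f K * h) := hle
      _ = h^2 * f K := by ring
  rw [hsplit1, hzero, hsplit2, hmain]
  linarith

private lemma W_diff_lower {f : ℝ → ℝ} (hfint : IntegrableOn f (Ici 0))
    (hpos : ∀ y, 0 ≤ y → 0 ≤ f y)
    (hanti : ∀ a b, 0 ≤ a → a ≤ b → f b ≤ f a)
    {K h : ℝ} (hh : 0 < h) (hhK : h < K) :
    h * (∫ y in Icc (0:ℝ) K, f y) - h^2 * f 0
      ≤ (∫ y in Ici (0:ℝ), f y * max (K - y) 0) - (∫ y in Ici (0:ℝ), f y * max (K - h - y) 0) := by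
  have hfΔ1 := intOn_mul_max hfint K
  have hfΔ2 := intOn_mul_max hfint (K - h)
  rw [← integral_sub hfΔ1 hfΔ2]
  set D : ℝ → ℝ := fun y => f y * max (K - y) 0 - f y * max (K - h - y) 0 with hD
  have hDI : IntegrableOn D (Ici 0) := hfΔ1.sub hfΔ2
  have hsplit1 : ∫ y in Ici (0:ℝ), D y
      = (∫ y in Icc (0:ℝ) K, D y) + ∫ y in Ioi K, D y := by
    rw [← setIntegral_union disj_Icc_Ioi measurableSet_Ioi (hDI.mono_set (fun y hy => hy.1))
      (hDI.mono_set (fun y hy => by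
        simp only [mem_Ioi] at hy; exact mem_Ici.mpr (by linarith))),
      Icc_union_Ioi_eq_Ici (by linarith)]
  have hzero : ∫ y in Ioi K, D y = 0 := by
    rw [setIntegral_congr_fun measurableSet_Ioi (fun y hy => ?_), integral_zero]
    have : K < y := hy
    simp only [hD, Pi.zero_apply]
    rw [max_eq_right (by linarith : K - y ≤ 0), max_eq_right (by linarith : K - h - y ≤ 0)]
    ring
  have hsplit2 : ∫ y in Icc (0:ℝ) K, D y
      = (∫ y in Icc (0:ℝ) (K - h), D y) + ∫ y in Ioc (K - h) K, D y := by
    rw [← setIntegral_union disj_Icc_Ioc measurableSet_Ioc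
      (hDI.mono_set (fun y hy => hy.1)) (hDI.mono_set (fun y hy => by
        simp only [mem_Ioc] at hy; exact mem_Ici.mpr (by linarith))),
      Icc_union_Ioc_eq_Icc (by linarith) (by linarith)]
  have hmain : ∫ y in Icc (0:ℝ) (K - h), D y = h * ∫ y in Icc (0:ℝ) (K - h), f y := by
    rw [setIntegral_congr_fun measurableSet_Icc (g := fun y => h * f y) (fun y hy => ?_),
      integral_const_mul]
    have h1 : 0 ≤ K - h - y := by linarith [hy.2]
    simp only [hD]
    rw [max_eq_left (by linarith), max_eq_left (by linarith)]
    ring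
  have hmid : 0 ≤ ∫ y in Ioc (K - h) K, D y := by
    apply setIntegral_nonneg measurableSet_Ioc
    intro y hy
    simp only [mem_Ioc] at hy
    simp only [hD]
    rw [max_eq_right (by linarith : K - h - y ≤ 0)]
    have : 0 ≤ f y := hpos y (by linarith)
    have : 0 ≤ max (K - y) 0 := le_max_right _ _
    nlinarith
  have hfsplit : ∫ y in Icc (0:ℝ) K, f y
      = (∫ y in Icc (0:ℝ) (K - h), f y) + ∫ y in Ioc (K - h) K, f y := by
    rw [← setIntegral_union disj_Icc_Ioc measurableSet_Ioc
      (hfint.mono_set (fun y hy => hy.1)) (hfint.mono_set (fun y hy => by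
        simp only [mem_Ioc] at hy; exact mem_Ici.mpr (by linarith))),
      Icc_union_Ioc_eq_Icc (by linarith) (by linarith)]
  have hftail : ∫ y in Ioc (K - h) K, f y ≤ h * f 0 := by
    have hle : ∫ y in Ioc (K - h) K, f y ≤ ∫ _ in Ioc (K - h) K, f 0 := by
      apply setIntegral_mono_on (hfint.mono_set (fun y hy => by
        simp only [mem_Ioc] at hy; exact mem_Ici.mpr (by linarith)))
        (integrableOn_const measure_Ioc_lt_top.ne) measurableSet_Ioc
      intro y hy
      simp only [mem_Ioc] at hy
      exact hanti 0 y le_rfl (by linarith)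
    rw [setIntegral_const, Real.volume_real_Ioc_of_le (by linarith), show K - (K - h) = h by ring,
      smul_eq_mul] at hle
    exact hle
  have hf00 : 0 ≤ f 0 := hpos 0 le_rfl
  rw [hsplit1, hzero, hsplit2, hmain]
  nlinarith [hfsplit, hftail, hmid]


private lemma adj_mul2 {f : ℝ → ℝ} (hf : ConvexOn ℝ (Ici 0) f) {x y z : ℝ}
    (hx : 0 ≤ x) (hxy : x < y) (hyz : y < z) :
    (f y - f x) * (z - y) ≤ (f z - f y) * (y - x) := by
  have h := hf.slope_mono_adjacent (mem_Ici.mpr hx)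
    (mem_Ici.mpr (by linarith : (0:ℝ) ≤ z)) hxy hyz
  rw [div_le_div_iff₀ (by linarith) (by linarith)] at h
  linarith

private lemma slope_le_left {f : ℝ → ℝ} (hf : ConvexOn ℝ (Ici 0) f) {a p α β : ℝ}
    (ha : 0 ≤ a) (hap : a < p) (haffeq : ∀ y ∈ Icc a p, f y = α * y + β) :
    ∀ x y, 0 ≤ x → x < y → y ≤ p → f y - f x ≤ α * (y - x) := by
  have claim1 : ∀ x, 0 ≤ x → x < p → f p - f x ≤ α * (p - x) := by
    intro x hx hxp
    rcases le_or_gt a x with hax | hxa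
    · have h1 := haffeq x ⟨hax, le_of_lt hxp⟩
      have h2 := haffeq p ⟨le_of_lt hap, le_rfl⟩
      rw [h1, h2]; ring_nf; exact le_rfl
    · have hadj := adj_mul2 hf hx hxa hap
      have h1 := haffeq a ⟨le_rfl, le_of_lt hap⟩
      have h2 := haffeq p ⟨le_of_lt hap, le_rfl⟩
      rw [h1, h2] at hadj
      have h3 : (f a - f x) ≤ α * (a - x) := by
        have h4 : (f a - f x) * (p - a) ≤ (α * (a - x)) * (p - a) := by
          rw [h1]; nlinarith [hadj]
        exact le_of_mul_le_mul_right h4 (by linarith)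
      rw [h2]
      linarith [h3, h1]
  intro x y hx hxy hyp
  rcases eq_or_lt_of_le hyp with rfl | hylt
  · exact claim1 x hx hxy
  · have hadj := adj_mul2 hf hx hxy hylt
    have hc := claim1 y (by linarith) hylt
    have h4 : (f y - f x) * (p - y) ≤ (α * (y - x)) * (p - y) := by nlinarith
    exact le_of_mul_le_mul_right h4 (by linarith)

private lemma slope_ge_right {f : ℝ → ℝ} (hf : ConvexOn ℝ (Ici 0) f) {p q β c : ℝ}
    (hp : 0 ≤ p) (hpq : p < q) (haffeq : ∀ y ∈ Icc p q, f y = β * y + c) :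
    ∀ x y, p ≤ x → x < y → β * (y - x) ≤ f y - f x := by
  have claim2 : ∀ y, p < y → β * (y - p) ≤ f y - f p := by
    intro y hpy
    rcases le_or_gt y q with hyq | hqy
    · have h1 := haffeq y ⟨le_of_lt hpy, hyq⟩
      have h2 := haffeq p ⟨le_rfl, le_of_lt hpq⟩
      rw [h1, h2]; ring_nf; exact le_rfl
    · have hadj := adj_mul2 hf hp hpq hqy
      have h1 := haffeq q ⟨le_of_lt hpq, le_rfl⟩
      have h2 := haffeq p ⟨le_rfl, le_of_lt hpq⟩
      have h3 : β * (y - q) ≤ f y - f q := by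
        have h4 : (β * (y - q)) * (q - p) ≤ (f y - f q) * (q - p) := by
          nlinarith [hadj]
        exact le_of_mul_le_mul_right h4 (by linarith)
      nlinarith [h3]
  intro x y hpx hxy
  rcases eq_or_lt_of_le hpx with rfl | hpx'
  · exact claim2 y (by linarith)
  · have hadj := adj_mul2 hf hp hpx' hxy
    have hc := claim2 x hpx'
    have h4 : (β * (y - x)) * (x - p) ≤ (f y - f x) * (x - p) := by nlinarith
    exact le_of_mul_le_mul_right h4 (by linarith)

private lemma derivWithin_left_eq {f : ℝ → ℝ} {a p α β : ℝ} (hap : a < p)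
    (haffeq : ∀ y ∈ Icc a p, f y = α * y + β) :
    derivWithin f (Iic p) p = α := by
  have hev : f =ᶠ[nhdsWithin p (Iic p)] (fun y => α * y + β) := by
    have hmem : Icc a p ∈ nhdsWithin p (Iic p) :=
      mem_nhdsWithin.mpr ⟨Ioi a, isOpen_Ioi, hap, by rintro y ⟨h1, h2⟩; exact ⟨le_of_lt h1, h2⟩⟩
    exact Filter.eventuallyEq_of_mem hmem haffeq
  rw [hev.derivWithin_eq (haffeq p ⟨le_of_lt hap, le_rfl⟩)]
  have hd : HasDerivWithinAt (fun y => α * y + β) α (Iic p) p := by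
    simpa using (((hasDerivAt_id p).const_mul α).add_const β).hasDerivWithinAt
  exact hd.derivWithin (uniqueDiffOn_Iic p p self_mem_Iic)

private lemma derivWithin_right_eq {f : ℝ → ℝ} {p q β c : ℝ} (hpq : p < q)
    (haffeq : ∀ y ∈ Icc p q, f y = β * y + c) :
    derivWithin f (Ici p) p = β := by
  have hev : f =ᶠ[nhdsWithin p (Ici p)] (fun y => β * y + c) := by
    have hmem : Icc p q ∈ nhdsWithin p (Ici p) :=
      mem_nhdsWithin.mpr ⟨Iio q, isOpen_Iio, hpq, by rintro y ⟨h1, h2⟩; exact ⟨h2, le_of_lt h1⟩⟩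
    exact Filter.eventuallyEq_of_mem hmem haffeq
  rw [hev.derivWithin_eq (haffeq p ⟨le_rfl, le_of_lt hpq⟩)]
  have hd : HasDerivWithinAt (fun y => β * y + c) β (Ici p) p := by
    simpa using (((hasDerivAt_id p).const_mul β).add_const c).hasDerivWithinAt
  exact hd.derivWithin (uniqueDiffOn_Ici p p self_mem_Ici)

private lemma derivWithin_right_zero {f : ℝ → ℝ} {p : ℝ}
    (h0 : ∀ y, p ≤ y → f y = 0) :
    derivWithin f (Ici p) p = 0 := by
  have hev : f =ᶠ[nhdsWithin p (Ici p)] (fun _ => (0:ℝ)) :=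
    Filter.eventuallyEq_of_mem self_mem_nhdsWithin (fun y hy => h0 y hy)
  rw [hev.derivWithin_eq (h0 p le_rfl)]
  exact (hasDerivWithinAt_const p _ (0:ℝ)).derivWithin (uniqueDiffOn_Ici p p self_mem_Ici)

private lemma le_of_forall_h {a b s : ℝ} (hs : 0 ≤ s)
    (h : ∀ h : ℝ, 0 < h → a ≤ b + h * s) : a ≤ b := by
  rcases eq_or_lt_of_le hs with h0 | hpos
  · have := h 1 one_pos; rw [← h0] at this; linarith
  · by_contra hc
    push_neg at hc
    have hkey := h ((a - b)/(2*s)) (div_pos (by linarith) (by linarith))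
    have : (a - b)/(2*s) * s = (a - b)/2 := by field_simp
    rw [this] at hkey
    linarith

private lemma le_of_forall_h_cap {a b s K : ℝ} (hs : 0 ≤ s) (hK : 0 < K)
    (h : ∀ h : ℝ, 0 < h → h < K → a ≤ b + h * s) : a ≤ b := by
  rcases eq_or_lt_of_le hs with h0 | hpos
  · have := h (K/2) (by linarith) (by linarith); rw [← h0] at this; linarith
  · by_contra hc
    push_neg at hc
    have hmin : 0 < min (K/2) ((a - b)/(2*s)) := lt_min (by linarith) (div_pos (by linarith) (by linarith))
    have hkey := h _ hmin (lt_of_le_of_lt (min_le_left _ _) (by linarith))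
    have h2 : min (K/2) ((a - b)/(2*s)) * s ≤ (a - b)/(2*s) * s :=
      mul_le_mul_of_nonneg_right (min_le_right _ _) hs
    have h3 : (a - b)/(2*s) * s = (a - b)/2 := by field_simp
    linarith

/-- Equation (8) for the least squares estimator: the estimated distribution function
agrees with the empirical distribution function at every knot of the piecewise linear
estimated density. -/
theorem lse_equals_edf_at_knots
    (n : ℕ) (hn : 1 ≤ n) (x : Fin n → ℝ) (hx : ∀ i, 0 < x i)
    (EDF : ℝ → ℝ)
    (hEDF : ∀ r : ℝ, EDF r = (n : ℝ)⁻¹ * (Finset.univ.filter fun i => x i ≤ r).card)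
    (fhat : ℝ → ℝ)
    (hfconv : ConvexOn ℝ (Ici 0) fhat) (hfint : IntegrableOn fhat (Ici 0))
    (hfsq : IntegrableOn (fun y => fhat y ^ 2) (Ici 0))
    (hopt : ∀ h : ℝ → ℝ, ConvexOn ℝ (Ici 0) h → IntegrableOn h (Ici 0) →
      IntegrableOn (fun y => h y ^ 2) (Ici 0) →
      (∫ y in Ici (0 : ℝ), fhat y ^ 2) - (2 / n) * ∑ i, fhat (x i) ≤
        (∫ y in Ici (0 : ℝ), h y ^ 2) - (2 / n) * ∑ i, h (x i))
    (m : ℕ) (t : ℕ → ℝ)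
    (ht0 : t 0 = 0) (htlt : ∀ k, k < m → t k < t (k + 1))
    (htmax : ∀ i, x i < t m)
    (haff : ∀ k, 1 ≤ k → k ≤ m → ∃ α β : ℝ,
      ∀ y ∈ Icc (t (k - 1)) (t k), fhat y = α * y + β)
    (htail : ∀ y, t m ≤ y → fhat y = 0)
    (hkink : ∀ k, 1 ≤ k → k ≤ m →
      derivWithin fhat (Iic (t k)) (t k) < derivWithin fhat (Ici (t k)) (t k)) :
    ∀ k ≤ m, EDF (t k) = ∫ u in (0 : ℝ)..(t k), fhat u := by

  intro k hk
  have hnpos : (0:ℝ) < n := by exact_mod_cast Nat.lt_of_lt_of_le Nat.zero_lt_one hn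
  by_cases hk0 : k = 0
  · subst hk0
    rw [ht0, intervalIntegral.integral_same, hEDF 0]
    have hfilt : (Finset.univ.filter fun i => x i ≤ (0:ℝ)) = ∅ :=
      Finset.filter_false_of_mem (fun i _ => not_le.mpr (hx i))
    rw [hfilt]
    simp
  -- main case : 1 ≤ k
  have hk1 : 1 ≤ k := Nat.one_le_iff_ne_zero.mpr hk0
  have htmono : ∀ i j : ℕ, i ≤ j → j ≤ m → t i ≤ t j := by
    intro i j hij hjm
    induction j with
    | zero => simp_all
    | succ j ih =>
      rcases eq_or_lt_of_le hij with rfl | hij'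
      · exact le_rfl
      · exact le_trans (ih (by omega) (by omega)) (le_of_lt (htlt j (by omega)))
  have hk1k : t (k - 1) < t k := by
    have h1 := htlt (k - 1) (by omega)
    rwa [Nat.sub_add_cancel hk1] at h1
  have hK : 0 < t k :=
    lt_of_le_of_lt (le_of_eq_of_le ht0.symm (htmono 0 (k-1) (Nat.zero_le _) (by omega))) hk1k
  have hpos : ∀ y, 0 ≤ y → 0 ≤ fhat y := nonneg_of_conv hfconv htail
  have hanti : ∀ a b, 0 ≤ a → a ≤ b → fhat b ≤ fhat a := anti_of_conv hfconv htail
  obtain ⟨α, cst, haffL⟩ := haff k hk1 hk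
  have hRpack : ∃ β : ℝ, derivWithin fhat (Ici (t k)) (t k) = β ∧
      ∀ x y, t k ≤ x → x < y → β * (y - x) ≤ fhat y - fhat x := by
    rcases eq_or_lt_of_le hk with rfl | hkm
    · refine ⟨0, derivWithin_right_zero (fun y hy => htail y hy), fun u v hu huv => ?_⟩
      rw [htail u hu, htail v (by linarith)]
      simp
    · obtain ⟨β, c2, haffR⟩ := haff (k+1) (by omega) (by omega)
      have heq : k + 1 - 1 = k := by omega
      rw [heq] at haffR
      have hkk1 : t k < t (k+1) := htlt k hkm
      exact ⟨β, derivWithin_right_eq hkk1 haffR,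
        slope_ge_right hfconv (le_of_lt hK) hkk1 haffR⟩
  obtain ⟨β, hdR, hRprop⟩ := hRpack
  have hdL : derivWithin fhat (Iic (t k)) (t k) = α := derivWithin_left_eq hk1k haffL
  have hLR : α < β := by
    have := hkink k hk1 hk
    rwa [hdL, hdR] at this
  have htk1nn : (0:ℝ) ≤ t (k - 1) :=
    le_of_eq_of_le ht0.symm (htmono 0 (k-1) (Nat.zero_le _) (by omega))
  have hLprop := slope_le_left hfconv htk1nn hk1k haffL
  have hconvs : ∀ ε : ℝ, -(β - α) ≤ ε → ε ≤ 0 →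
      ConvexOn ℝ (Ici 0) (fun y => fhat y + ε * max (t k - y) 0) := fun ε h1 h2 =>
    conv_pert hfconv hK hLprop hRprop (by linarith) h2
  have hle := var_le n x fhat hfint hfsq hopt (t k) (β - α) (by linarith) hconvs
  have hge := var_ge n x fhat hfconv hfint hfsq hopt
  have hEDFK := hEDF (t k)
  have hninv : (0:ℝ) ≤ (n:ℝ)⁻¹ := by positivity
  have hupper : EDF (t k) ≤ ∫ y in Icc (0:ℝ) (t k), fhat y := by
    apply le_of_forall_h (hpos (t k) hK.le)
    intro h hh
    have hsum : (∑ i, max (t k - x i) 0)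
        + ((Finset.univ.filter fun i => x i ≤ t k).card : ℝ) * h
        ≤ ∑ i, max (t k + h - x i) 0 := by
      have h1 : ∀ i ∈ Finset.univ, max (t k - x i) 0 + (if x i ≤ t k then h else 0)
          ≤ max (t k + h - x i) 0 := by
        intro i _
        rcases le_or_gt (x i) (t k) with hxi | hxi
        · rw [if_pos hxi, max_eq_left (by linarith), max_eq_left (by linarith)]
          linarith
        · rw [if_neg (not_le.mpr hxi), max_eq_right (by linarith), add_zero]
          exact le_max_right _ _
      have h2 := Finset.sum_le_sum h1
      rw [Finset.sum_add_distrib] at h2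
      have h3 : (∑ i : Fin n, if x i ≤ t k then h else 0)
          = ((Finset.univ.filter fun i => x i ≤ t k).card : ℝ) * h := by
        rw [← Finset.sum_filter, Finset.sum_const, nsmul_eq_mul]
      rwa [h3] at h2
    have hS := mul_le_mul_of_nonneg_left hsum hninv
    have hWub := W_diff_upper hfint hpos hanti hK hh
    have h1 := hge (t k + h)
    have hchain : h * ((n:ℝ)⁻¹ * ((Finset.univ.filter fun i => x i ≤ t k).card : ℝ))
        ≤ h * ((∫ y in Icc (0:ℝ) (t k), fhat y) + h * fhat (t k)) := by
      nlinarith [hS, h1, hle, hWub]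
    rw [hEDFK]
    have := le_of_mul_le_mul_left hchain hh
    nlinarith [this]
  have hlower : (∫ y in Icc (0:ℝ) (t k), fhat y) ≤ EDF (t k) := by
    apply le_of_forall_h_cap (hpos 0 le_rfl) hK
    intro h hh hhK
    have hsum : (∑ i, max (t k - x i) 0) - (∑ i, max (t k - h - x i) 0)
        ≤ ((Finset.univ.filter fun i => x i ≤ t k).card : ℝ) * h := by
      have h1 : ∀ i ∈ Finset.univ, max (t k - x i) 0 - max (t k - h - x i) 0
          ≤ (if x i ≤ t k then h else 0) := by
        intro i _
        rcases le_or_gt (x i) (t k) with hxi | hxi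
        · rw [if_pos hxi]
          rcases le_or_gt (t k - h - x i) 0 with h2 | h2
          · rw [max_eq_right h2]
            rcases le_or_gt (t k - x i) 0 with h3 | h3
            · rw [max_eq_right h3]; linarith
            · rw [max_eq_left h3.le]; linarith
          · rw [max_eq_left h2.le, max_eq_left (by linarith)]; linarith
        · rw [if_neg (not_le.mpr hxi), max_eq_right (by linarith),
            max_eq_right (by linarith)]
          linarith
      have h2 := Finset.sum_le_sum h1
      rw [Finset.sum_sub_distrib] at h2
      have h3 : (∑ i : Fin n, if x i ≤ t k then h else 0)
          = ((Finset.univ.filter fun i => x i ≤ t k).card : ℝ) * h := by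
        rw [← Finset.sum_filter, Finset.sum_const, nsmul_eq_mul]
      rwa [h3] at h2
    have hS := mul_le_mul_of_nonneg_left hsum hninv
    have hWlb := W_diff_lower hfint hpos hanti hh hhK
    have h2 := hge (t k - h)
    have hchain : h * (∫ y in Icc (0:ℝ) (t k), fhat y)
        ≤ h * (EDF (t k) + h * fhat 0) := by
      rw [hEDFK]
      nlinarith [hS, h2, hle, hWlb]
    exact le_of_mul_le_mul_left hchain hh
  have hfinal : EDF (t k) = ∫ y in Icc (0:ℝ) (t k), fhat y := le_antisymm hupper hlower
  rw [intervalIntegral.integral_of_le hK.le]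
  rw [hfinal]
  exact integral_Icc_eq_integral_Ioc
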